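/- Let p₂ be the quadratic polynomial satisfying (1/Δx)∫_{I_i} p₂ dx = ū_i, (1/Δx)∫_{I_{i+1}} p₂ dx = ū_{i+1}, and (1/Δx)∫_{I_i} p₂(x)(x−x_i)/Δx dx = v̄_i on a uniform mesh of size Δx. Then its Jiang–Shu smoothness indicator on I_i equals 144 v̄_i² + (13/3)(ū_i − ū_{i+1} + 12 v̄_i)². -/

import Mathlib

set_option maxHeartbeats 1000000


open intervalIntegral

lemma cubic_int (c0 c1 c2 c3 α β : ℝ) (f : ℝ → ℝ)
    (hf : ∀ x, f x = c0 + c1*x + c2*x^2 + c3*x^3) :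
    ∫ x in α..β, f x =
      (c0*β + c1*β^2/2 + c2*β^3/3 + c3*β^4/4)
        - (c0*α + c1*α^2/2 + c2*α^3/3 + c3*α^4/4) := by
  have hfe : f = fun x => c0 + c1*x + c2*x^2 + c3*x^3 := funext hf
  subst hfe
  apply intervalIntegral.integral_eq_sub_of_hasDerivAt
  · intro x _
    have h := ((((hasDerivAt_id x).const_mul c0).add
        (((hasDerivAt_pow 2 x).const_mul c1).div_const 2)).add
        (((hasDerivAt_pow 3 x).const_mul c2).div_const 3)).add
        (((hasDerivAt_pow 4 x).const_mul c3).div_const 4)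
    convert h using 1
    · funext y
      simp only [Pi.add_apply, id_eq]
    · push_cast
      ring
  · apply Continuous.intervalIntegrable
    continuity

theorem stmt_13 (Δx xi ubar0 ubarp1 vbar0 : ℝ) (hΔx : 0 < Δx)
    (a b c : ℝ) (p : ℝ → ℝ)
    (hp : ∀ x, p x = a + b * x + c * x^2)
    (havg0 : (1/Δx) * ∫ x in (xi - 1/2 * Δx)..(xi + 1/2 * Δx), p x = ubar0)
    (havgp1 : (1/Δx) * ∫ x in (xi + 1/2 * Δx)..(xi + 3/2 * Δx), p x = ubarp1)
    (hmom0 : (1/Δx) * ∫ x in (xi - 1/2 * Δx)..(xi + 1/2 * Δx),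
        p x * ((x - xi)/Δx) = vbar0) :
    ((∫ x in (xi - 1/2 * Δx)..(xi + 1/2 * Δx), Δx * (b + 2*c*x)^2)
      + ∫ x in (xi - 1/2 * Δx)..(xi + 1/2 * Δx), Δx^3 * (2*c)^2)
      = 144 * vbar0^2 + (13/3) * (ubar0 - ubarp1 + 12 * vbar0)^2 := by
  have hne : Δx ≠ 0 := ne_of_gt hΔx
  have I1 := cubic_int a b c 0 (xi - 1/2 * Δx) (xi + 1/2 * Δx) p
    (by intro x; rw [hp]; ring)
  have I2 := cubic_int a b c 0 (xi + 1/2 * Δx) (xi + 3/2 * Δx) p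
    (by intro x; rw [hp]; ring)
  have I3 := cubic_int (-a*xi/Δx) ((a - b*xi)/Δx) ((b - c*xi)/Δx) (c/Δx)
    (xi - 1/2 * Δx) (xi + 1/2 * Δx) (fun x => p x * ((x - xi)/Δx))
    (by intro x; show p x * ((x - xi)/Δx) = _; rw [hp]; field_simp; ring)
  have I4 := cubic_int (Δx*b^2) (Δx*(4*b*c)) (Δx*(4*c^2)) 0
    (xi - 1/2 * Δx) (xi + 1/2 * Δx) (fun x => Δx * (b + 2*c*x)^2)
    (by intro x; show Δx * (b + 2*c*x)^2 = _; ring)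
  have I5 := cubic_int (Δx^3*(2*c)^2) 0 0 0
    (xi - 1/2 * Δx) (xi + 1/2 * Δx) (fun x => Δx^3 * (2*c)^2)
    (by intro x; show Δx^3 * (2*c)^2 = _; ring)
  have E1 : ubar0 = a + b*xi + c*xi^2 + c*Δx^2/12 := by
    rw [← havg0, I1]; field_simp; ring
  have E2 : ubarp1 = a + b*(xi+Δx) + c*(xi+Δx)^2 + c*Δx^2/12 := by
    rw [← havgp1, I2]; field_simp; ring
  have E3 : vbar0 = (b + 2*c*xi)*Δx/12 := by
    rw [← hmom0, I3]; field_simp; ring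
  rw [I4, I5, E1, E2, E3]
  ring
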